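/- Divisibility estimate for the iterated connection terms: let p be odd, n ≥ 1, and work in a commutative Q_p-algebra containing elements A, B with A ∈ p^{2n}·R and 1−B ∈ p^n·R for a p-adically complete subring R, and let M be an element such that k!·binom(M+k, m) ∈ p^{−nm}·R for all k, m. Then the element (−1)^i ∑_{k=0}^{i} binom(i,k)(−AB)^k k! ∑_{j=0}^{k} binom(M+k, k−j) binom(i−k, j) (1−B)^{i−k−j}(−B)^j lies in p^{ni}·R. -/
import Mathlib


/-- The generalized binomial coefficient `binom(x,m) = x(x-1)⋯(x-m+1)/m!` for an element
`x` of a commutative `ℚ_p`-algebra. -/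
noncomputable def genBinomP (p : ℕ) [Fact p.Prime] {S : Type*} [CommRing S]
    [Algebra ℚ_[p] S] (x : S) (m : ℕ) : S :=
  algebraMap ℚ_[p] S ((m.factorial : ℚ_[p]))⁻¹ * ∏ t ∈ Finset.range m, (x - (t : S))

private lemma sum_factor_aux {S : Type*} [CommRing S] (R : Subring S) (c : S) {ι : Type*}
    (t : Finset ι) (f : ι → S) (h : ∀ x ∈ t, ∃ r ∈ R, f x = c * r) :
    ∃ r ∈ R, ∑ x ∈ t, f x = c * r := by
  classical
  induction t using Finset.induction_on with
  | empty => exact ⟨0, R.zero_mem, by simp⟩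
  | @insert a s hx ih =>
    obtain ⟨r1, hr1, he1⟩ := h a (Finset.mem_insert_self a s)
    obtain ⟨r2, hr2, he2⟩ := ih fun x hxs => h x (Finset.mem_insert_of_mem hxs)
    exact ⟨r1 + r2, R.add_mem hr1 hr2, by rw [Finset.sum_insert hx, he1, he2]; ring⟩

/-- Divisibility estimate for the iterated connection terms: for `p` odd, `n ≥ 1`,
a `p`-adically complete subring `R` of a `ℚ_p`-algebra `S`, and `A, B, M ∈ S` with
`A ∈ p^{2n}R`, `B ∈ R`, `1−B ∈ p^nR` and `k!·binom(M+k,m) ∈ p^{−nm}R` for all `k, m`,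
the element
`(−1)^i ∑_{k=0}^{i} binom(i,k)(−AB)^k k! ∑_{j=0}^{k} binom(M+k,k−j) binom(i−k,j)
   (1−B)^{i−k−j}(−B)^j`
lies in `p^{ni}·R`. -/
theorem iterated_connection_divisibility (p : ℕ) [Fact p.Prime] (hodd : p ≠ 2)
    (n i : ℕ) (hn : 1 ≤ n) (S : Type*) [CommRing S] [Algebra ℚ_[p] S] (R : Subring S)
    (M A B : S)
    (hA : ∃ a ∈ R, A = (p : S) ^ (2 * n) * a) (hB : B ∈ R)
    (hB' : ∃ b ∈ R, 1 - B = (p : S) ^ n * b)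
    (hM : ∀ k m : ℕ, (p : S) ^ (n * m) * ((k.factorial : S) * genBinomP p (M + (k : S)) m) ∈ R) :
    ∃ r ∈ R,
      (-1 : S) ^ i *
          ∑ k ∈ Finset.range (i + 1),
            (i.choose k : S) * (-(A * B)) ^ k * (k.factorial : S) *
              ∑ j ∈ Finset.range (k + 1),
                genBinomP p (M + (k : S)) (k - j) * ((i - k).choose j : S) *
                  (1 - B) ^ (i - k - j) * (-B) ^ j
        = (p : S) ^ (n * i) * r := by
  obtain ⟨a, ha, hAeq⟩ := hA
  obtain ⟨b, hb, hBeq⟩ := hB'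
  have main : ∃ r ∈ R,
      (∑ k ∈ Finset.range (i + 1),
        (i.choose k : S) * (-(A * B)) ^ k * (k.factorial : S) *
          ∑ j ∈ Finset.range (k + 1),
            genBinomP p (M + (k : S)) (k - j) * ((i - k).choose j : S) *
              (1 - B) ^ (i - k - j) * (-B) ^ j) = (p : S) ^ (n * i) * r := by
    apply sum_factor_aux
    intro k hk
    have hki : k ≤ i := Nat.lt_succ_iff.mp (Finset.mem_range.mp hk)
    rw [Finset.mul_sum]
    apply sum_factor_aux
    intro j hj
    have hjk : j ≤ k := Nat.lt_succ_iff.mp (Finset.mem_range.mp hj)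
    by_cases hjik : j ≤ i - k
    · refine ⟨(-1 : S) ^ k * (i.choose k : S) * a ^ k * B ^ k *
        ((p : S) ^ (n * (k - j)) * ((k.factorial : S) * genBinomP p (M + (k : S)) (k - j))) *
        ((i - k).choose j : S) * b ^ (i - k - j) * (-B) ^ j, ?_, ?_⟩
      · exact R.mul_mem (R.mul_mem (R.mul_mem (R.mul_mem (R.mul_mem (R.mul_mem
          (R.mul_mem (R.pow_mem (R.neg_mem R.one_mem) k) (natCast_mem R _))
          (R.pow_mem ha k)) (R.pow_mem hB k)) (hM k (k - j))) (natCast_mem R _))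
          (R.pow_mem hb _)) (R.pow_mem (R.neg_mem hB) j)
      · have hexp : ((p : S) ^ (2 * n)) ^ k * ((p : S) ^ n) ^ (i - k - j)
            = (p : S) ^ (n * i) * (p : S) ^ (n * (k - j)) := by
          rw [← pow_mul, ← pow_mul, ← pow_add, ← pow_add]
          congr 1
          rw [show 2 * n * k = n * (2 * k) by ring, ← Nat.mul_add, ← Nat.mul_add]
          congr 1
          omega
        rw [hAeq, hBeq, neg_mul_eq_neg_mul, neg_mul_eq_neg_mul]
        rw [show (-((p : S) ^ (2 * n)) * a * B) ^ k
            = (-1 : S) ^ k * ((p : S) ^ (2 * n)) ^ k * a ^ k * B ^ k by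
          rw [neg_mul, neg_mul, neg_pow, mul_pow, mul_pow]; ring]
        rw [mul_pow]
        linear_combination ((-1 : S) ^ k * (i.choose k : S) * a ^ k * B ^ k *
          (k.factorial : S) * genBinomP p (M + (k : S)) (k - j) * ((i - k).choose j : S) *
          b ^ (i - k - j) * (-B) ^ j) * hexp
    · refine ⟨0, R.zero_mem, ?_⟩
      have h0 : (i - k).choose j = 0 := Nat.choose_eq_zero_of_lt (by omega)
      rw [h0]
      push_cast
      ring
  obtain ⟨r, hr, hre⟩ := main
  exact ⟨(-1 : S) ^ i * r, R.mul_mem (R.pow_mem (R.neg_mem R.one_mem) i) hr,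
    by rw [hre]; ring⟩
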